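/- For every t ≥ 0, the standard Gaussian tail satisfies e^{−t²/2}/(√(2π)·(t + λ0)) ≤ Q(t) ≤ e^{−t²/2}/(2·λ0·t + 2) ≤ e^{−t²/2}. -/

import Mathlib

open MeasureTheory ProbabilityTheory Real

/-- Standard Gaussian upper tail probability. -/
noncomputable def Q (t : ℝ) : ℝ := ((gaussianReal 0 1) (Set.Ioi t)).toReal

noncomputable def lam0 : ℝ := Real.sqrt (2 / Real.pi)

noncomputable def phi (x : ℝ) : ℝ := (Real.sqrt (2 * Real.pi))⁻¹ * Real.exp (-x ^ 2 / 2)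

lemma pdf_eq : gaussianPDFReal 0 1 = phi := by
  funext x
  simp [gaussianPDFReal, phi]

lemma phi_nonneg (x : ℝ) : 0 ≤ phi x := by
  unfold phi; positivity

lemma sqrt_two_pi_pos : 0 < Real.sqrt (2 * Real.pi) :=
  Real.sqrt_pos.2 (by positivity)

lemma phi_pos (x : ℝ) : 0 < phi x := by
  unfold phi
  exact mul_pos (inv_pos.2 sqrt_two_pi_pos) (Real.exp_pos _)

lemma phi_cont : Continuous phi := by
  unfold phi; fun_prop

lemma phi_integrable : Integrable phi := by
  rw [← pdf_eq]; exact integrable_gaussianPDFReal 0 1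

lemma Q_eq (t : ℝ) : Q t = ∫ x in Set.Ioi t, phi x := by
  rw [Q, gaussianReal_apply_eq_integral 0 one_ne_zero, pdf_eq,
    ENNReal.toReal_ofReal (setIntegral_nonneg measurableSet_Ioi fun x _ => phi_nonneg x)]

lemma Q_sub {a b : ℝ} (hab : a ≤ b) : Q a = (∫ x in a..b, phi x) + Q b := by
  rw [Q_eq, Q_eq, intervalIntegral.integral_of_le hab,
    ← setIntegral_union (Set.Ioc_disjoint_Ioi le_rfl) measurableSet_Ioi
      (phi_integrable.integrableOn) (phi_integrable.integrableOn),
    Set.Ioc_union_Ioi_eq_Ioi hab]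

lemma Q_eq' (x : ℝ) : Q x = Q 0 - ∫ s in (0:ℝ)..x, phi s := by
  rcases le_total 0 x with h | h
  · rw [Q_sub h]; ring
  · rw [Q_sub h, intervalIntegral.integral_symm]; ring

lemma hasDerivAt_Q (t : ℝ) : HasDerivAt Q (-(phi t)) t := by
  have h : HasDerivAt (fun x => ∫ s in (0:ℝ)..x, phi s) (phi t) t :=
    intervalIntegral.integral_hasDerivAt_right (phi_integrable.intervalIntegrable)
      phi_cont.aestronglyMeasurable.stronglyMeasurableAtFilter phi_cont.continuousAt
  have h2 := (hasDerivAt_const t (Q 0)).sub h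
  simp only [zero_sub] at h2
  exact h2.congr_of_eventuallyEq (Filter.Eventually.of_forall Q_eq')

lemma Q_zero : Q 0 = 1 / 2 := by
  have h1 : ∫ x in Set.Iic (0:ℝ), phi x = ∫ x in Set.Ioi (0:ℝ), phi x := by
    have h := integral_comp_neg_Ioi 0 phi
    simp only [neg_zero] at h
    rw [← h]
    congr 1
    funext x
    simp [phi]
  have h2 : (∫ x in Set.Iic (0:ℝ), phi x) + ∫ x in Set.Ioi (0:ℝ), phi x = ∫ x, phi x :=
    intervalIntegral.integral_Iic_add_Ioi phi_integrable.integrableOn phi_integrable.integrableOn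
  have h3 : ∫ x, phi x = 1 := by
    rw [← pdf_eq]; exact integral_gaussianPDFReal_eq_one 0 one_ne_zero
  rw [Q_eq]
  rw [h1, h3] at h2
  linarith

lemma Q_tendsto : Filter.Tendsto Q Filter.atTop (nhds 0) := by
  have h : Filter.Tendsto (fun x => ∫ s in (0:ℝ)..x, phi s) Filter.atTop
      (nhds (∫ s in Set.Ioi (0:ℝ), phi s)) :=
    MeasureTheory.intervalIntegral_tendsto_integral_Ioi 0 phi_integrable.integrableOn
      Filter.tendsto_id
  have h2 : Filter.Tendsto (fun x => Q 0 - ∫ s in (0:ℝ)..x, phi s) Filter.atTop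
      (nhds (Q 0 - ∫ s in Set.Ioi (0:ℝ), phi s)) := (tendsto_const_nhds.sub h)
  rw [← Q_eq 0, sub_self] at h2
  exact h2.congr fun x => (Q_eq' x).symm

lemma exp_neg_sq_tendsto :
    Filter.Tendsto (fun x : ℝ => Real.exp (-x ^ 2 / 2)) Filter.atTop (nhds 0) := by
  have h0 : Filter.Tendsto (fun x : ℝ => x ^ 2 / 2) Filter.atTop Filter.atTop :=
    (Filter.tendsto_pow_atTop two_ne_zero).atTop_div_const (by norm_num)
  have h : Filter.Tendsto (fun x : ℝ => -x ^ 2 / 2) Filter.atTop Filter.atBot := by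
    have h1 := Filter.tendsto_neg_atTop_atBot.comp h0
    exact Filter.Tendsto.congr (fun x => by simp [Function.comp, neg_div]) h1
  exact Real.tendsto_exp_atBot.comp h

lemma phi_tendsto : Filter.Tendsto phi Filter.atTop (nhds 0) := by
  have := exp_neg_sq_tendsto.const_mul ((Real.sqrt (2 * Real.pi))⁻¹)
  rw [mul_zero] at this
  exact this

lemma lam0_pos : 0 < lam0 := Real.sqrt_pos.2 (by positivity)

lemma lam0_sq : lam0 ^ 2 = 2 / Real.pi := Real.sq_sqrt (by positivity)

lemma lam0_mul_sqrt : lam0 * Real.sqrt (2 * Real.pi) = 2 := by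
  rw [lam0, ← Real.sqrt_mul (by positivity)]
  rw [show 2 / Real.pi * (2 * Real.pi) = 4 by field_simp; ring]
  rw [show (4 : ℝ) = 2 ^ 2 by norm_num, Real.sqrt_sq (by norm_num)]

lemma sqrt_eq_div : Real.sqrt (2 * Real.pi) = 2 / lam0 := by
  rw [eq_div_iff lam0_pos.ne', mul_comm]
  exact lam0_mul_sqrt

lemma lam0_sq_lt_one : lam0 ^ 2 < 1 := by
  rw [lam0_sq, div_lt_one Real.pi_pos]
  linarith [Real.pi_gt_three]

lemma sqrt_lt_four_lam0 : Real.sqrt (2 * Real.pi) < 4 * lam0 := by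
  rw [sqrt_eq_div, div_lt_iff₀ lam0_pos]
  have h2 : lam0 * lam0 * Real.pi = 2 := by
    have h : lam0 * lam0 = 2 / Real.pi := by rw [← sq]; exact lam0_sq
    rw [h]; field_simp
  nlinarith [Real.pi_lt_d2, Real.pi_pos]

lemma hasDerivAt_exp_neg_sq (t : ℝ) :
    HasDerivAt (fun x : ℝ => Real.exp (-x ^ 2 / 2)) (-t * Real.exp (-t ^ 2 / 2)) t := by
  have h : HasDerivAt (fun x : ℝ => -x ^ 2 / 2) (-t) t := by
    have := ((hasDerivAt_pow 2 t).neg).div_const 2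
    simpa [neg_div] using this
  simpa [mul_comm] using h.exp

lemma hasDerivAt_phi (t : ℝ) : HasDerivAt phi (-t * phi t) t := by
  have := (hasDerivAt_exp_neg_sq t).const_mul ((Real.sqrt (2 * Real.pi))⁻¹)
  unfold phi
  refine this.congr_deriv ?_
  ring

lemma hasDerivAt_g (t : ℝ) (h : 0 ≤ t) :
    HasDerivAt (fun x => Q x - phi x / (x + lam0))
      (phi t * (1 - lam0 * t - lam0 ^ 2) / (t + lam0) ^ 2) t := by
  have hne : t + lam0 ≠ 0 := ne_of_gt (by linarith [lam0_pos])
  have h1 := (hasDerivAt_phi t).div ((hasDerivAt_id t).add_const lam0) hne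
  have h2 := (hasDerivAt_Q t).sub h1
  refine h2.congr_deriv ?_
  simp only [id]
  field_simp
  ring

lemma g_tendsto :
    Filter.Tendsto (fun x => Q x - phi x / (x + lam0)) Filter.atTop (nhds 0) := by
  have h : Filter.Tendsto (fun x => phi x / (x + lam0)) Filter.atTop (nhds 0) := by
    apply squeeze_zero' (g := fun x => phi x / lam0)
    · filter_upwards [Filter.eventually_ge_atTop (0 : ℝ)] with x hx
      exact div_nonneg (phi_nonneg x) (by linarith [lam0_pos])
    · filter_upwards [Filter.eventually_ge_atTop (0 : ℝ)] with x hx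
      gcongr
      · exact phi_nonneg x
      · exact lam0_pos
      · linarith
    · simpa using phi_tendsto.div_const lam0
  simpa using Q_tendsto.sub h

lemma g_zero : Q 0 - phi 0 / (0 + lam0) = 0 := by
  have h : phi 0 / lam0 = 1 / 2 := by
    have hp : phi 0 = lam0 / 2 := by
      unfold phi
      rw [sqrt_eq_div, inv_div]
      norm_num
    rw [hp, div_div, mul_comm, ← div_div, div_self lam0_pos.ne']
  rw [Q_zero, zero_add, h]
  norm_num

lemma g_nonneg (t : ℝ) (ht : 0 ≤ t) : 0 ≤ Q t - phi t / (t + lam0) := by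
  set g := fun x => Q x - phi x / (x + lam0) with hg
  set c := (1 - lam0 ^ 2) / lam0 with hc
  have hc0 : 0 < c := div_pos (by linarith [lam0_sq_lt_one]) lam0_pos
  have hlc : lam0 * c = 1 - lam0 ^ 2 := by
    rw [hc, mul_comm, div_mul_cancel₀ _ lam0_pos.ne']
  have hcont : ∀ x : ℝ, 0 ≤ x → ContinuousAt g x := fun x hx =>
    (hasDerivAt_g x hx).differentiableAt.continuousAt
  rcases le_total t c with h | h
  · -- monotone on [0, c]
    have hmono : MonotoneOn g (Set.Icc 0 c) := by
      apply monotoneOn_of_hasDerivWithinAt_nonneg (convex_Icc 0 c)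
        (fun x hx => (hcont x hx.1).continuousWithinAt)
        (fun x hx => (hasDerivAt_g x
          (by rw [interior_Icc] at hx; exact hx.1.le)).hasDerivWithinAt)
      intro x hx
      rw [interior_Icc] at hx
      have hnum : 0 ≤ 1 - lam0 * x - lam0 ^ 2 := by nlinarith [lam0_pos, hx.1, hx.2]
      exact div_nonneg (mul_nonneg (phi_nonneg x) hnum) (sq_nonneg _)
    have h0m : (0:ℝ) ∈ Set.Icc 0 c := ⟨le_rfl, hc0.le⟩
    have htm : t ∈ Set.Icc 0 c := ⟨ht, h⟩
    have h1 := hmono h0m htm ht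
    have hz : g 0 = 0 := g_zero
    calc (0:ℝ) = g 0 := hz.symm
    _ ≤ g t := h1
  · -- antitone on [c, ∞)
    have hanti : AntitoneOn g (Set.Ici c) := by
      apply antitoneOn_of_hasDerivWithinAt_nonpos (convex_Ici c)
        (fun x hx => (hcont x (hc0.le.trans hx)).continuousWithinAt)
        (fun x hx => (hasDerivAt_g x
          (by rw [interior_Ici] at hx; exact (hc0.trans hx).le)).hasDerivWithinAt)
      intro x hx
      rw [interior_Ici] at hx
      have hnum : 1 - lam0 * x - lam0 ^ 2 ≤ 0 := by
        have hcx := mul_le_mul_of_nonneg_left (Set.mem_Ioi.1 hx).le lam0_pos.le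
        linarith [hlc, hcx]
      have hd : (0:ℝ) ≤ (x + lam0) ^ 2 := sq_nonneg _
      exact div_nonpos_of_nonpos_of_nonneg
        (mul_nonpos_iff.2 (Or.inl ⟨phi_nonneg x, hnum⟩)) hd
    have : ∀ᶠ y in Filter.atTop, g y ≤ g t := by
      filter_upwards [Filter.eventually_ge_atTop t] with y hy
      exact hanti (by exact h) (le_trans h hy) hy
    exact le_of_tendsto g_tendsto this

lemma hasDerivAt_u (t : ℝ) (h : 0 ≤ t) :
    HasDerivAt (fun x => Real.exp (-x ^ 2 / 2) / (2 * lam0 * x + 2) - Q x)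
      (Real.exp (-t ^ 2 / 2) *
          (t * ((4 * lam0 ^ 2 - 4) * t + (8 * lam0 - 2 * Real.sqrt (2 * Real.pi)))) /
        (Real.sqrt (2 * Real.pi) * (2 * lam0 * t + 2) ^ 2)) t := by
  have hne : 2 * lam0 * t + 2 ≠ 0 := ne_of_gt (by nlinarith [lam0_pos])
  have hd : HasDerivAt (fun x : ℝ => 2 * lam0 * x + 2) (2 * lam0) t := by
    simpa using ((hasDerivAt_id t).const_mul (2 * lam0)).add_const (2 : ℝ)
  have h1 := (hasDerivAt_exp_neg_sq t).div hd hne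
  have h2 := h1.sub (hasDerivAt_Q t)
  refine h2.congr_deriv ?_
  unfold phi
  rw [sqrt_eq_div]
  have hl := lam0_pos.ne'
  have hne' : t * lam0 + 1 ≠ 0 := ne_of_gt (by nlinarith [lam0_pos])
  field_simp
  ring

lemma u_tendsto :
    Filter.Tendsto (fun x => Real.exp (-x ^ 2 / 2) / (2 * lam0 * x + 2) - Q x)
      Filter.atTop (nhds 0) := by
  have h : Filter.Tendsto (fun x : ℝ => Real.exp (-x ^ 2 / 2) / (2 * lam0 * x + 2))
      Filter.atTop (nhds 0) := by
    apply squeeze_zero' (g := fun x : ℝ => Real.exp (-x ^ 2 / 2) / 2)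
    · filter_upwards [Filter.eventually_ge_atTop (0 : ℝ)] with x hx
      exact div_nonneg (Real.exp_nonneg _) (by nlinarith [lam0_pos])
    · filter_upwards [Filter.eventually_ge_atTop (0 : ℝ)] with x hx
      gcongr <;> nlinarith [lam0_pos]
    · simpa using exp_neg_sq_tendsto.div_const 2
  simpa using h.sub Q_tendsto

lemma u_zero : Real.exp (-(0 : ℝ) ^ 2 / 2) / (2 * lam0 * 0 + 2) - Q 0 = 0 := by
  rw [Q_zero]
  norm_num

lemma u_nonneg (t : ℝ) (ht : 0 ≤ t) :
    0 ≤ Real.exp (-t ^ 2 / 2) / (2 * lam0 * t + 2) - Q t := by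
  set u := fun x => Real.exp (-x ^ 2 / 2) / (2 * lam0 * x + 2) - Q x with hu
  set d := (8 * lam0 - 2 * Real.sqrt (2 * Real.pi)) / (4 - 4 * lam0 ^ 2) with hd
  have hnum0 : 0 < 8 * lam0 - 2 * Real.sqrt (2 * Real.pi) := by
    linarith [sqrt_lt_four_lam0]
  have hden0 : 0 < 4 - 4 * lam0 ^ 2 := by linarith [lam0_sq_lt_one]
  have hd0 : 0 < d := div_pos hnum0 hden0
  have hdd : (4 - 4 * lam0 ^ 2) * d = 8 * lam0 - 2 * Real.sqrt (2 * Real.pi) := by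
    rw [hd, mul_comm, div_mul_cancel₀ _ hden0.ne']
  have hcont : ∀ x : ℝ, 0 ≤ x → ContinuousAt u x := fun x hx =>
    (hasDerivAt_u x hx).differentiableAt.continuousAt
  rcases le_total t d with h | h
  · have hmono : MonotoneOn u (Set.Icc 0 d) := by
      apply monotoneOn_of_hasDerivWithinAt_nonneg (convex_Icc 0 d)
        (fun x hx => (hcont x hx.1).continuousWithinAt)
        (fun x hx => (hasDerivAt_u x
          (by rw [interior_Icc] at hx; exact hx.1.le)).hasDerivWithinAt)
      intro x hx
      rw [interior_Icc] at hx
      have hb : 0 ≤ (4 * lam0 ^ 2 - 4) * x + (8 * lam0 - 2 * Real.sqrt (2 * Real.pi)) := by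
        nlinarith [hx.1, hx.2, hdd, hden0]
      have hn : 0 ≤ x * ((4 * lam0 ^ 2 - 4) * x +
          (8 * lam0 - 2 * Real.sqrt (2 * Real.pi))) := mul_nonneg hx.1.le hb
      exact div_nonneg (mul_nonneg (Real.exp_nonneg _) hn)
        (mul_nonneg sqrt_two_pi_pos.le (sq_nonneg _))
    have h1 := hmono ⟨le_rfl, hd0.le⟩ ⟨ht, h⟩ ht
    calc (0:ℝ) = u 0 := u_zero.symm
    _ ≤ u t := h1
  · have hanti : AntitoneOn u (Set.Ici d) := by
      apply antitoneOn_of_hasDerivWithinAt_nonpos (convex_Ici d)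
        (fun x hx => (hcont x (hd0.le.trans hx)).continuousWithinAt)
        (fun x hx => (hasDerivAt_u x
          (by rw [interior_Ici] at hx; exact (hd0.trans hx).le)).hasDerivWithinAt)
      intro x hx
      rw [interior_Ici] at hx
      have hxd : d < x := hx
      have hb : (4 * lam0 ^ 2 - 4) * x + (8 * lam0 - 2 * Real.sqrt (2 * Real.pi)) ≤ 0 := by
        nlinarith [hdd, hden0]
      have hn : x * ((4 * lam0 ^ 2 - 4) * x +
          (8 * lam0 - 2 * Real.sqrt (2 * Real.pi))) ≤ 0 :=
        mul_nonpos_iff.2 (Or.inl ⟨(hd0.trans hxd).le, hb⟩)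
      exact div_nonpos_of_nonpos_of_nonneg
        (mul_nonpos_iff.2 (Or.inl ⟨Real.exp_nonneg _, hn⟩))
        (mul_nonneg sqrt_two_pi_pos.le (sq_nonneg _))
    have hev : ∀ᶠ y in Filter.atTop, u y ≤ u t := by
      filter_upwards [Filter.eventually_ge_atTop t] with y hy
      exact hanti (by exact h) (le_trans h hy) hy
    exact le_of_tendsto u_tendsto hev

theorem Q_tail_bounds (t : ℝ) (ht : 0 ≤ t) :
    Real.exp (-t ^ 2 / 2) / (Real.sqrt (2 * Real.pi) * (t + lam0)) ≤ Q t ∧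
    Q t ≤ Real.exp (-t ^ 2 / 2) / (2 * lam0 * t + 2) ∧
    Real.exp (-t ^ 2 / 2) / (2 * lam0 * t + 2) ≤ Real.exp (-t ^ 2 / 2) := by
  refine ⟨?_, ?_, ?_⟩
  · have h := g_nonneg t ht
    have he : Real.exp (-t ^ 2 / 2) / (Real.sqrt (2 * Real.pi) * (t + lam0))
        = phi t / (t + lam0) := by
      unfold phi
      rw [inv_mul_eq_div, div_div]
    rw [he]
    linarith
  · linarith [u_nonneg t ht]
  · exact div_le_self (Real.exp_nonneg _) (by nlinarith [lam0_pos])
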